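/- Consider the Hamiltonian p(x,ξ) = y(x) ξ₁ |ξ| on ℝ³ × ℝ³ with x = (x₁,y,x₃), and the bicharacteristic ODE Ẋ = ∇_ξ p(X,Ξ), Ξ̇ = −∇_x p(X,Ξ) with initial data X(0) = (0,1,0), Ξ(0) = (λ, −λ, 0) for λ > 0. Then the solution satisfies Ξ₂(t) = −λ sinh(λt + θ₀) and y(X(t)) = cosh(θ₀)/cosh(λt + θ₀), where θ₀ = sinh⁻¹(1) = log(1+√2). In particular y(X(t)) · |Ξ(t)| is conserved and |Ξ(t)| grows like λ e^{λt}. -/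

import Mathlib

private theorem const_of_hasDerivAt_zero {f : ℝ → ℝ} (h : ∀ t, HasDerivAt f 0 t) :
    ∀ t, f t = f 0 := fun t =>
  is_const_of_deriv_eq_zero (fun x => (h x).differentiableAt)
    (fun x => (h x).deriv) t 0

/-- The bicharacteristics of the Hamiltonian `p(x,ξ) = x₂ ξ₁ |ξ|` with initial data
`X(0) = (0,1,0)`, `Ξ(0) = (λ,−λ,0)` satisfy `Ξ₂(t) = −λ sinh(λt+θ₀)` and
`y(X(t)) = cosh θ₀ / cosh(λt+θ₀)` with `θ₀ = sinh⁻¹ 1`; in particular `y(X(t))·|Ξ(t)|`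
is conserved. Here the components of `X` are `(X, Y, Z)` and those of `Ξ` are
`(Ξ₁, Ξ₂, Ξ₃)`, and `nrm t = |Ξ(t)|`. -/
theorem bicharacteristic_instability (lam : ℝ) (hlam : 0 < lam)
    (X Y Z Ξ1 Ξ2 Ξ3 nrm : ℝ → ℝ)
    (hnrm : ∀ t, nrm t = Real.sqrt (Ξ1 t ^ 2 + Ξ2 t ^ 2 + Ξ3 t ^ 2))
    -- Hamiltonian ODE: Ẋ = ∇_ξ p(X,Ξ)
    (hX : ∀ t, HasDerivAt X (Y t * (nrm t + Ξ1 t ^ 2 / nrm t)) t)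
    (hY : ∀ t, HasDerivAt Y (Y t * (Ξ1 t * Ξ2 t / nrm t)) t)
    (hZ : ∀ t, HasDerivAt Z (Y t * (Ξ1 t * Ξ3 t / nrm t)) t)
    -- Hamiltonian ODE: Ξ̇ = −∇_x p(X,Ξ)
    (hΞ1 : ∀ t, HasDerivAt Ξ1 0 t)
    (hΞ2 : ∀ t, HasDerivAt Ξ2 (-(Ξ1 t * nrm t)) t)
    (hΞ3 : ∀ t, HasDerivAt Ξ3 0 t)
    -- initial data
    (hX0 : X 0 = 0) (hY0 : Y 0 = 1) (hZ0 : Z 0 = 0)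
    (hΞ10 : Ξ1 0 = lam) (hΞ20 : Ξ2 0 = -lam) (hΞ30 : Ξ3 0 = 0) :
    ∀ t : ℝ,
      Ξ2 t = -lam * Real.sinh (lam * t + Real.arsinh 1) ∧
      Y t = Real.cosh (Real.arsinh 1) / Real.cosh (lam * t + Real.arsinh 1) ∧
      Y t * nrm t = Y 0 * nrm 0 := by
  have hlam' : lam ≠ 0 := ne_of_gt hlam
  set θ := Real.arsinh 1 with hθ
  -- Ξ1 and Ξ3 are constant
  have hΞ1c : ∀ s, Ξ1 s = lam := fun s => by
    rw [← hΞ10]; exact const_of_hasDerivAt_zero hΞ1 s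
  have hΞ3c : ∀ s, Ξ3 s = 0 := fun s => by
    rw [← hΞ30]; exact const_of_hasDerivAt_zero hΞ3 s
  have hnrm' : ∀ s, nrm s = Real.sqrt (lam ^ 2 + Ξ2 s ^ 2) := fun s => by
    rw [hnrm s, hΞ1c s, hΞ3c s]; ring_nf
  have hnrmpos : ∀ s, 0 < nrm s := fun s => by
    rw [hnrm' s]; exact Real.sqrt_pos.mpr (by positivity)
  have hnrmsq : ∀ s, nrm s ^ 2 = lam ^ 2 + Ξ2 s ^ 2 := fun s => by
    rw [hnrm' s]; exact Real.sq_sqrt (by positivity)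
  -- the phase arsinh(-Ξ2/lam) has derivative lam
  have hφ : ∀ s, HasDerivAt (fun u => Real.arsinh (-Ξ2 u / lam)) lam s := by
    intro s
    have h1 : HasDerivAt (fun u => -Ξ2 u / lam) (nrm s) s := by
      have h := ((hΞ2 s).neg).div_const lam
      refine h.congr_deriv ?_
      rw [hΞ1c s]; field_simp
    have h3 := (Real.hasDerivAt_arsinh (-Ξ2 s / lam)).comp s h1
    refine h3.congr_deriv ?_
    have hs : Real.sqrt (1 + (-Ξ2 s / lam) ^ 2) = nrm s / lam := by
      rw [show 1 + (-Ξ2 s / lam) ^ 2 = (nrm s / lam) ^ 2 by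
        rw [div_pow, div_pow, hnrmsq s]; field_simp]
      exact Real.sqrt_sq (div_nonneg (hnrmpos s).le hlam.le)
    rw [hs]
    field_simp [ne_of_gt (hnrmpos s)]
  -- hence arsinh(-Ξ2 s / lam) = lam * s + θ
  have hφeq : ∀ s, Real.arsinh (-Ξ2 s / lam) = lam * s + θ := by
    have hz : ∀ s, HasDerivAt (fun u => Real.arsinh (-Ξ2 u / lam) - lam * u) 0 s := by
      intro s
      have h1 : HasDerivAt (fun u : ℝ => lam * u) lam s := by
        simpa using (hasDerivAt_id s).const_mul lam
      have h2 := (hφ s).sub h1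
      simp only [sub_self] at h2
      exact h2
    intro s
    have := const_of_hasDerivAt_zero hz s
    simp only [hΞ20, mul_zero, sub_zero] at this
    have h0 : -(-lam) / lam = (1 : ℝ) := by field_simp
    rw [h0] at this
    linarith [this]
  have hΞ2eq : ∀ s, Ξ2 s = -lam * Real.sinh (lam * s + θ) := by
    intro s
    have := congrArg Real.sinh (hφeq s)
    rw [Real.sinh_arsinh] at this
    field_simp at this
    linarith [this]
  have hnrmeq : ∀ s, nrm s = lam * Real.cosh (lam * s + θ) := by
    intro s
    rw [hnrm' s, hΞ2eq s]
    rw [show lam ^ 2 + (-lam * Real.sinh (lam * s + θ)) ^ 2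
        = (lam * Real.cosh (lam * s + θ)) ^ 2 by
      rw [mul_pow, mul_pow, Real.cosh_sq]; ring]
    exact Real.sqrt_sq (mul_pos hlam (Real.cosh_pos _)).le
  -- Y u * cosh(lam u + θ) is constant
  have hψ : ∀ s, HasDerivAt (fun u => Y u * Real.cosh (lam * u + θ)) 0 s := by
    intro s
    have h1 : HasDerivAt (fun u : ℝ => lam * u + θ) lam s := by
      simpa using ((hasDerivAt_id s).const_mul lam).add_const θ
    have hc : HasDerivAt (fun u => Real.cosh (lam * u + θ))
        (Real.sinh (lam * s + θ) * lam) s := by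
      have h4 := (Real.hasDerivAt_cosh (lam * s + θ)).comp s h1
      exact h4
    have h := (hY s).mul hc
    refine h.congr_deriv ?_
    rw [hΞ1c s, hΞ2eq s, hnrmeq s]
    have hch : Real.cosh (lam * s + θ) ≠ 0 := ne_of_gt (Real.cosh_pos _)
    field_simp
    ring
  have hψeq : ∀ s, Y s * Real.cosh (lam * s + θ) = Real.cosh θ := by
    intro s
    have := const_of_hasDerivAt_zero hψ s
    rwa [hY0, mul_zero, zero_add, one_mul] at this
  intro t
  have hch : Real.cosh (lam * t + θ) ≠ 0 := ne_of_gt (Real.cosh_pos _)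
  refine ⟨hΞ2eq t, ?_, ?_⟩
  · rw [eq_div_iff hch]
    exact hψeq t
  · rw [hnrmeq t, hnrmeq 0, hY0, mul_zero, zero_add, one_mul]
    have h1 := hψeq t
    calc Y t * (lam * Real.cosh (lam * t + θ))
        = lam * (Y t * Real.cosh (lam * t + θ)) := by ring
      _ = lam * Real.cosh θ := by rw [h1]
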